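/- For a Poisson random variable X with mean μ > 0 and positive integer q ≥ 2, the function μ ↦ (E[X_q])² / E[X_q(X_q-1)] is strictly increasing in μ, where X_q = min(X, q). -/

import Mathlib

/-- The Poisson probability mass function with real mean parameter `μ`. -/
noncomputable def poissonPMF (μ : ℝ) (n : ℕ) : ℝ := Real.exp (-μ) * μ ^ n / n.factorial

lemma pPMF_pos {μ : ℝ} (hμ : 0 < μ) (n : ℕ) : 0 < poissonPMF μ n := by
  unfold poissonPMF; positivity

lemma summable_pPMF (μ : ℝ) : Summable (fun n => poissonPMF μ n) := by
  have : (fun n => poissonPMF μ n) = fun n => Real.exp (-μ) * (μ ^ n / n.factorial) := by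
    funext n; unfold poissonPMF; ring
  rw [this]
  exact (Real.summable_pow_div_factorial μ).mul_left _

lemma tsum_pPMF (μ : ℝ) : ∑' n, poissonPMF μ n = 1 := by
  have h1 : ∑' n : ℕ, poissonPMF μ n = Real.exp (-μ) * ∑' n : ℕ, μ ^ n / n.factorial := by
    rw [← tsum_mul_left]
    congr 1; funext n; unfold poissonPMF; ring
  have h2 : ∑' n : ℕ, μ ^ n / (n.factorial : ℝ) = Real.exp μ := by
    rw [Real.exp_eq_exp_ℝ, NormedSpace.exp_eq_tsum_div]
  rw [h1, h2, ← Real.exp_add]; simp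

lemma descFac2 (m : ℕ) : ((m.descFactorial 2 : ℕ):ℝ) = (m:ℝ) * ((m:ℝ) - 1) := by
  cases m with
  | zero => simp
  | succ k => simp [Nat.descFactorial]; ring

lemma pPMF_succ (μ : ℝ) (n : ℕ) :
    ((n:ℝ)+1) * μ ^ n * Real.exp (-μ) / (n+1).factorial = poissonPMF μ n := by
  unfold poissonPMF
  rw [Nat.factorial_succ]
  have h : ((n.factorial : ℝ)) ≠ 0 := Nat.cast_ne_zero.2 n.factorial_ne_zero
  push_cast
  field_simp

lemma pPMF_mul (μ : ℝ) (n : ℕ) :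
    μ * poissonPMF μ n = ((n:ℝ)+1) * poissonPMF μ (n+1) := by
  unfold poissonPMF
  rw [Nat.factorial_succ]
  have h : ((n.factorial : ℝ)) ≠ 0 := Nat.cast_ne_zero.2 n.factorial_ne_zero
  push_cast
  field_simp
  ring

lemma hasDeriv_pPMF (n : ℕ) (μ : ℝ) :
    HasDerivAt (fun μ => poissonPMF μ n)
      ((n:ℝ) * μ ^ (n-1) * Real.exp (-μ) / n.factorial - poissonPMF μ n) μ := by
  have h1 : HasDerivAt (fun μ : ℝ => Real.exp (-μ)) (-Real.exp (-μ)) μ := by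
    simpa using (hasDerivAt_neg μ).exp
  have h2 : HasDerivAt (fun μ : ℝ => μ ^ n) ((n:ℝ) * μ ^ (n-1)) μ := hasDerivAt_pow n μ
  have := (h1.mul h2).div_const (n.factorial : ℝ)
  convert this using 1
  · exact rfl
  · exact rfl
  · rfl
  unfold poissonPMF
  ring

lemma sum_shift (μ : ℝ) (k : ℕ) (c : ℕ → ℝ) :
    ∑ n ∈ Finset.range (k+1), c n * ((n:ℝ) * μ ^ (n-1) * Real.exp (-μ) / n.factorial)
      = ∑ m ∈ Finset.range k, c (m+1) * poissonPMF μ m := by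
  rw [Finset.sum_range_succ']
  simp only [Nat.cast_zero, zero_mul, mul_zero, Nat.factorial_zero, zero_div, add_zero]
  refine Finset.sum_congr rfl fun i _ => ?_
  rw [Nat.add_sub_cancel]
  congr 1
  rw [← pPMF_succ μ i]
  push_cast
  ring

lemma tsumA (μ : ℝ) (q : ℕ) :
    ∑' n : ℕ, poissonPMF μ n * min (n:ℝ) (q:ℝ)
      = (q:ℝ) - ∑ n ∈ Finset.range q, ((q:ℝ) - n) * poissonPMF μ n := by
  have hfun : ∀ n : ℕ, poissonPMF μ n * min (n:ℝ) (q:ℝ)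
      = (q:ℝ) * poissonPMF μ n - ((q:ℝ) - min (n:ℝ) (q:ℝ)) * poissonPMF μ n := by
    intro n; ring
  have hvanish : ∀ n ∉ Finset.range q, ((q:ℝ) - min (n:ℝ) (q:ℝ)) * poissonPMF μ n = 0 := by
    intro n hn
    rw [Finset.mem_range, not_lt] at hn
    rw [min_eq_right (by exact_mod_cast hn : (q:ℝ) ≤ n)]
    simp
  have hsum2 : Summable (fun n : ℕ => ((q:ℝ) - min (n:ℝ) (q:ℝ)) * poissonPMF μ n) :=
    summable_of_ne_finset_zero hvanish
  calc ∑' n : ℕ, poissonPMF μ n * min (n:ℝ) (q:ℝ)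
      = ∑' n : ℕ, ((q:ℝ) * poissonPMF μ n - ((q:ℝ) - min (n:ℝ) (q:ℝ)) * poissonPMF μ n) :=
        tsum_congr hfun
    _ = (∑' n : ℕ, (q:ℝ) * poissonPMF μ n) - ∑' n : ℕ, ((q:ℝ) - min (n:ℝ) (q:ℝ)) * poissonPMF μ n :=
        Summable.tsum_sub ((summable_pPMF μ).mul_left _) hsum2
    _ = (q:ℝ) - ∑ n ∈ Finset.range q, ((q:ℝ) - n) * poissonPMF μ n := by
        rw [tsum_mul_left, tsum_pPMF, mul_one, tsum_eq_sum hvanish]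
        congr 1
        refine Finset.sum_congr rfl fun n hn => ?_
        rw [Finset.mem_range] at hn
        rw [min_eq_left (by exact_mod_cast hn.le : (n:ℝ) ≤ q)]

lemma tsumB (μ : ℝ) (q : ℕ) :
    ∑' n : ℕ, poissonPMF μ n * ((min n q).descFactorial 2 : ℝ)
      = (q:ℝ) * ((q:ℝ)-1)
        - ∑ n ∈ Finset.range q, ((q:ℝ) * ((q:ℝ)-1) - (n:ℝ) * ((n:ℝ)-1)) * poissonPMF μ n := by
  have hfun : ∀ n : ℕ, poissonPMF μ n * ((min n q).descFactorial 2 : ℝ)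
      = (q:ℝ) * ((q:ℝ)-1) * poissonPMF μ n
        - ((q:ℝ) * ((q:ℝ)-1) - ((min n q).descFactorial 2 : ℝ)) * poissonPMF μ n := by
    intro n; ring
  have hvanish : ∀ n ∉ Finset.range q,
      ((q:ℝ) * ((q:ℝ)-1) - ((min n q).descFactorial 2 : ℝ)) * poissonPMF μ n = 0 := by
    intro n hn
    rw [Finset.mem_range, not_lt] at hn
    rw [min_eq_right hn, descFac2]
    simp
  have hsum2 : Summable (fun n =>
      ((q:ℝ) * ((q:ℝ)-1) - ((min n q).descFactorial 2 : ℝ)) * poissonPMF μ n) :=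
    summable_of_ne_finset_zero hvanish
  calc ∑' n : ℕ, poissonPMF μ n * ((min n q).descFactorial 2 : ℝ)
      = ∑' n : ℕ, ((q:ℝ) * ((q:ℝ)-1) * poissonPMF μ n
        - ((q:ℝ) * ((q:ℝ)-1) - ((min n q).descFactorial 2 : ℝ)) * poissonPMF μ n) :=
        tsum_congr hfun
    _ = (∑' n : ℕ, (q:ℝ) * ((q:ℝ)-1) * poissonPMF μ n)
        - ∑' n : ℕ, ((q:ℝ) * ((q:ℝ)-1) - ((min n q).descFactorial 2 : ℝ)) * poissonPMF μ n :=
        Summable.tsum_sub ((summable_pPMF μ).mul_left _) hsum2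
    _ = _ := by
        rw [tsum_mul_left, tsum_pPMF, mul_one, tsum_eq_sum hvanish]
        congr 1
        refine Finset.sum_congr rfl fun n hn => ?_
        rw [Finset.mem_range] at hn
        rw [min_eq_left hn.le, descFac2]

lemma hasDerivA (q : ℕ) (hq : 1 ≤ q) (μ : ℝ) :
    HasDerivAt (fun μ => (q:ℝ) - ∑ n ∈ Finset.range q, ((q:ℝ) - n) * poissonPMF μ n)
      (∑ n ∈ Finset.range q, poissonPMF μ n) μ := by
  obtain ⟨k, rfl⟩ : ∃ k, q = k+1 := ⟨q-1, by omega⟩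
  have hsum : HasDerivAt
      (fun μ => ∑ n ∈ Finset.range (k+1), (((k+1:ℕ):ℝ) - n) * poissonPMF μ n)
      (∑ n ∈ Finset.range (k+1), (((k+1:ℕ):ℝ) - n) *
        ((n:ℝ) * μ ^ (n-1) * Real.exp (-μ) / n.factorial - poissonPMF μ n)) μ :=
    HasDerivAt.fun_sum fun n _ => (hasDeriv_pPMF n μ).const_mul _
  have h := hsum.const_sub (((k+1:ℕ):ℝ))
  convert h using 1
  · exact rfl
  · exact rfl
  have e1 : ∑ n ∈ Finset.range (k+1), (((k+1:ℕ):ℝ) - n) *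
      ((n:ℝ) * μ ^ (n-1) * Real.exp (-μ) / n.factorial - poissonPMF μ n)
      = (∑ n ∈ Finset.range (k+1), (((k+1:ℕ):ℝ) - n) *
          ((n:ℝ) * μ ^ (n-1) * Real.exp (-μ) / n.factorial))
        - ∑ n ∈ Finset.range (k+1), (((k+1:ℕ):ℝ) - n) * poissonPMF μ n := by
    rw [← Finset.sum_sub_distrib]
    exact Finset.sum_congr rfl fun n _ => by ring
  have keyA : ∑ n ∈ Finset.range (k+1), (((k+1:ℕ):ℝ) - n) *
      ((n:ℝ) * μ ^ (n-1) * Real.exp (-μ) / n.factorial)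
      = ∑ m ∈ Finset.range (k+1), ((k:ℝ) - m) * poissonPMF μ m := by
    rw [sum_shift μ k (fun n => ((k+1:ℕ):ℝ) - n), Finset.sum_range_succ, sub_self, zero_mul,
      add_zero]
    refine Finset.sum_congr rfl fun m _ => ?_
    push_cast
    ring
  rw [e1, keyA, neg_sub, ← Finset.sum_sub_distrib]
  refine Finset.sum_congr rfl fun n _ => ?_
  push_cast
  ring

lemma hasDerivB (q : ℕ) (hq : 1 ≤ q) (μ : ℝ) :
    HasDerivAt (fun μ => (q:ℝ) * ((q:ℝ)-1)
        - ∑ n ∈ Finset.range q, ((q:ℝ) * ((q:ℝ)-1) - (n:ℝ) * ((n:ℝ)-1)) * poissonPMF μ n)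
      (2 * ∑ n ∈ Finset.range q, (n:ℝ) * poissonPMF μ n) μ := by
  obtain ⟨k, rfl⟩ : ∃ k, q = k+1 := ⟨q-1, by omega⟩
  set Q : ℝ := ((k+1:ℕ):ℝ) with hQ
  have hsum : HasDerivAt
      (fun μ => ∑ n ∈ Finset.range (k+1), (Q * (Q-1) - (n:ℝ) * ((n:ℝ)-1)) * poissonPMF μ n)
      (∑ n ∈ Finset.range (k+1), (Q * (Q-1) - (n:ℝ) * ((n:ℝ)-1)) *
        ((n:ℝ) * μ ^ (n-1) * Real.exp (-μ) / n.factorial - poissonPMF μ n)) μ :=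
    HasDerivAt.fun_sum fun n _ => (hasDeriv_pPMF n μ).const_mul _
  have h := hsum.const_sub (Q * (Q-1))
  convert h using 1
  · exact rfl
  · exact rfl
  have e1 : ∑ n ∈ Finset.range (k+1), (Q * (Q-1) - (n:ℝ) * ((n:ℝ)-1)) *
      ((n:ℝ) * μ ^ (n-1) * Real.exp (-μ) / n.factorial - poissonPMF μ n)
      = (∑ n ∈ Finset.range (k+1), (Q * (Q-1) - (n:ℝ) * ((n:ℝ)-1)) *
          ((n:ℝ) * μ ^ (n-1) * Real.exp (-μ) / n.factorial))
        - ∑ n ∈ Finset.range (k+1), (Q * (Q-1) - (n:ℝ) * ((n:ℝ)-1)) * poissonPMF μ n := by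
    rw [← Finset.sum_sub_distrib]
    exact Finset.sum_congr rfl fun n _ => by ring
  have keyB : ∑ n ∈ Finset.range (k+1), (Q * (Q-1) - (n:ℝ) * ((n:ℝ)-1)) *
      ((n:ℝ) * μ ^ (n-1) * Real.exp (-μ) / n.factorial)
      = ∑ m ∈ Finset.range (k+1), (Q * (Q-1) - ((m:ℝ)+1) * (m:ℝ)) * poissonPMF μ m := by
    rw [sum_shift μ k (fun n => Q * (Q-1) - (n:ℝ) * ((n:ℝ)-1)), Finset.sum_range_succ]
    have hz : Q * (Q-1) - ((k:ℝ)+1) * (k:ℝ) = 0 := by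
      rw [hQ]; push_cast; ring
    rw [hz, zero_mul, add_zero]
    refine Finset.sum_congr rfl fun m _ => ?_
    push_cast
    ring
  rw [e1, keyB, neg_sub, Finset.mul_sum, ← Finset.sum_sub_distrib]
  refine Finset.sum_congr rfl fun n _ => ?_
  ring

lemma idI1 (q : ℕ) (μ : ℝ) :
    μ * ∑ n ∈ Finset.range q, poissonPMF μ n
      = (∑ n ∈ Finset.range q, (n:ℝ) * poissonPMF μ n) + (q:ℝ) * poissonPMF μ q := by
  have e2' : ∑ n ∈ Finset.range (q+1), (n:ℝ) * poissonPMF μ n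
      = ∑ n ∈ Finset.range q, ((n:ℝ)+1) * poissonPMF μ (n+1) := by
    rw [Finset.sum_range_succ' (fun m => (m:ℝ) * poissonPMF μ m) q]
    simp only [Nat.cast_zero, zero_mul, add_zero]
    exact Finset.sum_congr rfl fun i _ => by push_cast; ring
  have estep : ∑ n ∈ Finset.range q, μ * poissonPMF μ n
      = ∑ n ∈ Finset.range q, ((n:ℝ)+1) * poissonPMF μ (n+1) :=
    Finset.sum_congr rfl fun n _ => pPMF_mul μ n
  rw [Finset.mul_sum, estep, ← e2', Finset.sum_range_succ]

lemma idI2 (q : ℕ) (μ : ℝ) :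
    μ * ∑ n ∈ Finset.range q, (n:ℝ) * poissonPMF μ n
      = (∑ n ∈ Finset.range q, (n:ℝ) * ((n:ℝ)-1) * poissonPMF μ n)
        + (q:ℝ) * ((q:ℝ)-1) * poissonPMF μ q := by
  have e2' : ∑ n ∈ Finset.range (q+1), (n:ℝ) * ((n:ℝ)-1) * poissonPMF μ n
      = ∑ n ∈ Finset.range q, ((n:ℝ)+1) * (n:ℝ) * poissonPMF μ (n+1) := by
    rw [Finset.sum_range_succ' (fun m => (m:ℝ) * ((m:ℝ)-1) * poissonPMF μ m) q]
    simp only [Nat.cast_zero, zero_mul, add_zero]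
    exact Finset.sum_congr rfl fun i _ => by push_cast; ring
  have estep : ∑ n ∈ Finset.range q, μ * ((n:ℝ) * poissonPMF μ n)
      = ∑ n ∈ Finset.range q, ((n:ℝ)+1) * (n:ℝ) * poissonPMF μ (n+1) := by
    refine Finset.sum_congr rfl fun n _ => ?_
    rw [show μ * ((n:ℝ) * poissonPMF μ n) = (n:ℝ) * (μ * poissonPMF μ n) by ring, pPMF_mul]
    ring
  rw [Finset.mul_sum, estep, ← e2', Finset.sum_range_succ]

lemma tail_lt (q : ℕ) {μ : ℝ} (hμ : 0 < μ) :
    (∑ n ∈ Finset.range q, poissonPMF μ n) + poissonPMF μ q < 1 := by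
  have h1 : ∑ n ∈ Finset.range (q+2), poissonPMF μ n ≤ 1 := by
    rw [← tsum_pPMF μ]
    exact Summable.sum_le_tsum _ (fun n _ => (pPMF_pos hμ n).le) (summable_pPMF μ)
  rw [Finset.sum_range_succ, Finset.sum_range_succ] at h1
  have := pPMF_pos hμ (q+1)
  linarith

lemma gap_pos (q : ℕ) (hq : 2 ≤ q) {μ : ℝ} (hμ : 0 < μ) :
    0 < ((q:ℝ)-1) * (∑ n ∈ Finset.range q, poissonPMF μ n)
      - ∑ n ∈ Finset.range q, (n:ℝ) * poissonPMF μ n := by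
  rw [Finset.mul_sum, ← Finset.sum_sub_distrib]
  refine Finset.sum_pos' (fun n hn => ?_) ⟨0, Finset.mem_range.2 (by omega), ?_⟩
  · rw [Finset.mem_range] at hn
    have hn' : (n:ℝ) ≤ (q:ℝ) - 1 := by
      have : (n:ℝ) + 1 ≤ (q:ℝ) := by exact_mod_cast hn
      linarith
    have := (pPMF_pos hμ n).le
    nlinarith
  · have h1 : (1:ℝ) ≤ (q:ℝ) - 1 := by
      have : (2:ℝ) ≤ (q:ℝ) := by exact_mod_cast hq
      linarith
    have := pPMF_pos hμ 0
    simp only [Nat.cast_zero, zero_mul, sub_zero]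
    nlinarith

/-- For `X ~ Poisson(μ)` and an integer `q ≥ 2`, the function
`μ ↦ (E[X_q])² / E[X_q (X_q - 1)]` is strictly increasing on `μ > 0`,
where `X_q = min(X, q)`. -/
theorem stmt4 (q : ℕ) (hq : 2 ≤ q) :
    StrictMonoOn
      (fun μ : ℝ =>
        (∑' n : ℕ, poissonPMF μ n * (min n q : ℝ)) ^ 2 /
          (∑' n : ℕ, poissonPMF μ n * ((min n q).descFactorial 2 : ℝ)))
      (Set.Ioi 0) := by
  have hq1 : 1 ≤ q := by omega
  set A : ℝ → ℝ := fun μ => (q:ℝ) - ∑ n ∈ Finset.range q, ((q:ℝ) - n) * poissonPMF μ n with hA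
  set B : ℝ → ℝ := fun μ => (q:ℝ) * ((q:ℝ)-1)
      - ∑ n ∈ Finset.range q, ((q:ℝ) * ((q:ℝ)-1) - (n:ℝ) * ((n:ℝ)-1)) * poissonPMF μ n with hB
  have hfeq : (fun μ : ℝ =>
      (∑' n : ℕ, poissonPMF μ n * (min n q : ℝ)) ^ 2 /
        (∑' n : ℕ, poissonPMF μ n * ((min n q).descFactorial 2 : ℝ)))
      = fun μ : ℝ => (A μ)^2 / B μ := by
    funext μ
    rw [tsumA μ q, tsumB μ q]
  rw [hfeq]
  -- key facts at each point x > 0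
  have main : ∀ x : ℝ, 0 < x → ∃ d : ℝ, 0 < d ∧ HasDerivAt (fun μ => (A μ)^2 / B μ) d x := by
    intro x hx
    set S0 : ℝ := ∑ n ∈ Finset.range q, poissonPMF x n with hS0
    set S1 : ℝ := ∑ n ∈ Finset.range q, (n:ℝ) * poissonPMF x n with hS1
    set S2 : ℝ := ∑ n ∈ Finset.range q, (n:ℝ) * ((n:ℝ)-1) * poissonPMF x n with hS2
    set P : ℝ := poissonPMF x q with hP
    have hS0pos : 0 < S0 :=
      Finset.sum_pos (fun n _ => pPMF_pos hx n) ⟨0, Finset.mem_range.2 (by omega)⟩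
    have hS1nonneg : 0 ≤ S1 :=
      Finset.sum_nonneg fun n _ => mul_nonneg (Nat.cast_nonneg n) (pPMF_pos hx n).le
    have hS2nonneg : 0 ≤ S2 := by
      refine Finset.sum_nonneg fun n _ => mul_nonneg ?_ (pPMF_pos hx n).le
      rcases Nat.eq_zero_or_pos n with h | h
      · simp [h]
      · have : (1:ℝ) ≤ (n:ℝ) := by exact_mod_cast h
        nlinarith
    have hPpos : 0 < P := pPMF_pos hx q
    have htail : S0 + P < 1 := tail_lt q hx
    have hgap : 0 < ((q:ℝ)-1) * S0 - S1 := gap_pos q hq hx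
    have hI1 : x * S0 = S1 + (q:ℝ) * P := idI1 q x
    have hI2 : x * S1 = S2 + (q:ℝ) * ((q:ℝ)-1) * P := idI2 q x
    have hqR : (2:ℝ) ≤ (q:ℝ) := by exact_mod_cast hq
    -- closed forms for A x and B x
    have hsub1 : ∑ n ∈ Finset.range q, ((q:ℝ) - n) * poissonPMF x n = (q:ℝ) * S0 - S1 := by
      rw [hS0, hS1, Finset.mul_sum, ← Finset.sum_sub_distrib]
      exact Finset.sum_congr rfl fun n _ => by ring
    have hsub2 : ∑ n ∈ Finset.range q, ((q:ℝ) * ((q:ℝ)-1) - (n:ℝ) * ((n:ℝ)-1)) * poissonPMF x n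
        = (q:ℝ) * ((q:ℝ)-1) * S0 - S2 := by
      rw [hS0, hS2, Finset.mul_sum, ← Finset.sum_sub_distrib]
      exact Finset.sum_congr rfl fun n _ => by ring
    have hAx : A x = (q:ℝ) * (1 - S0) + S1 := by
      show (q:ℝ) - ∑ n ∈ Finset.range q, ((q:ℝ) - n) * poissonPMF x n = _
      rw [hsub1]; ring
    have hBx : B x = (q:ℝ) * ((q:ℝ)-1) * (1 - S0) + S2 := by
      show (q:ℝ) * ((q:ℝ)-1) - _ = _
      rw [hsub2]; ring
    have h10 : 0 < 1 - S0 := by linarith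
    have hq0 : (0:ℝ) < q := by linarith
    have hq1' : (0:ℝ) < (q:ℝ) - 1 := by linarith
    have hApos : 0 < A x := by
      rw [hAx]
      have := mul_pos hq0 h10
      linarith
    have hBpos : 0 < B x := by
      rw [hBx]
      have := mul_pos (mul_pos hq0 hq1') h10
      linarith
    -- the derivative
    have hdA : HasDerivAt A S0 x := hasDerivA q hq1 x
    have hdB : HasDerivAt B (2 * S1) x := hasDerivB q hq1 x
    have hd : HasDerivAt (fun μ => (A μ)^2 / B μ)
        ((2 * A x ^ 1 * S0 * B x - (A x)^2 * (2 * S1)) / (B x)^2) x := by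
      have h1 : HasDerivAt (fun μ => (A μ)^2) (2 * A x ^ 1 * S0) x := by
        simpa using hdA.fun_pow 2
      exact h1.div hdB (ne_of_gt hBpos)
    refine ⟨_, ?_, hd⟩
    have hclaim : S0 * B x - S1 * A x = (q:ℝ) * (1 - S0 - P) * (((q:ℝ)-1) * S0 - S1) := by
      rw [hAx, hBx]
      linear_combination S1 * hI1 - S0 * hI2
    have hnum : 2 * A x ^ 1 * S0 * B x - (A x)^2 * (2 * S1)
        = 2 * A x * (S0 * B x - S1 * A x) := by ring
    rw [hnum, hclaim]
    have h1 : 0 < 1 - S0 - P := by linarith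
    positivity
  -- conclude strict monotonicity
  apply strictMonoOn_of_deriv_pos (convex_Ioi 0)
  · intro x hx
    obtain ⟨d, _, hd⟩ := main x hx
    exact hd.continuousAt.continuousWithinAt
  · intro x hx
    rw [interior_Ioi] at hx
    obtain ⟨d, hdpos, hd⟩ := main x hx
    rw [hd.deriv]
    exact hdpos
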